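/- For every p ∈ (0,1) and every ω ∈ ℂ with |ω| < 1, the limit as N → ∞ of ((1−p)^N / ∏_{n=1}^N (2^n − 1)) · det B_N(p; c_0, …, c_N), where c_0 = 0 and c_j = ω^j / j for 1 ≤ j ≤ N, exists and equals −∫_0^1 Log(1 − ωx) dμ_p(x), where Log denotes the principal branch of the complex logarithm. -/

import Mathlib

open MeasureTheory

/-- The probability measure on `{0,1}` (encoded as `Bool`, `false` ↔ digit `0`,
`true` ↔ digit `1`) giving mass `p` to the digit `0` and mass `1 - p` to the digit `1`. -/
noncomputable def bernoulliBool (p : ℝ) : Measure Bool :=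
  ENNReal.ofReal p • Measure.dirac false + ENNReal.ofReal (1 - p) • Measure.dirac true

/-- `ν` is the infinite product, over `n ≥ 1` (indexed here by `ℕ`, where index `n`
stands for the digit `n+1`), of the Bernoulli measures `bernoulliBool p`:
it is characterized as the projective limit of the finite product measures. -/
def IsBernoulliProduct (p : ℝ) (ν : Measure (ℕ → Bool)) : Prop :=
  IsProjectiveLimit ν fun J : Finset ℕ => Measure.pi fun _ : J => bernoulliBool p

/-- The binary expansion map sending a 0-1 sequence `(x_n)_{n ≥ 1}` to
`∑_{n=1}^∞ x_n 2^{-n}` (index `n : ℕ` stands for the digit `n+1`). -/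
noncomputable def binExpand (x : ℕ → Bool) : ℝ :=
  ∑' n : ℕ, if x n then ((2 : ℝ) ^ (n + 1))⁻¹ else 0

/-- `μ` is the Bernoulli measure `μ_p` on `ℝ`: the pushforward under the binary
expansion map of the infinite product of Bernoulli measures on `{0,1}`. -/
def IsBernoulliMeasure (p : ℝ) (μ : Measure ℝ) : Prop :=
  ∃ ν : Measure (ℕ → Bool), IsBernoulliProduct p ν ∧ μ = ν.map binExpand

/-- The `(N+1) × (N+1)` complex Hessenberg matrix `B_N(p; c_0, …, c_N)` (1-indexed in the
paper, 0-indexed here): for `0 ≤ i < N` the row `i` (paper row `i+1`) has entries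
`C(i+1, j)` for `j ≤ i`, the entry `(1 - 2^{i+1})/(1-p)` at column `j = i+1`, and `0`
for `j > i+1`; the last row (row `N`) is `(c_0, c_1, …, c_N)`. -/
noncomputable def Bmat (N : ℕ) (p : ℝ) (c : Fin (N + 1) → ℂ) :
    Matrix (Fin (N + 1)) (Fin (N + 1)) ℂ := fun i j =>
  if (i : ℕ) < N then
    if (j : ℕ) ≤ (i : ℕ) then (Nat.choose ((i : ℕ) + 1) (j : ℕ) : ℂ)
    else if (j : ℕ) = (i : ℕ) + 1 then (1 - 2 ^ ((i : ℕ) + 1)) / (1 - (p : ℂ))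
    else 0
  else c j

def consB (b : Bool) (y : ℕ → Bool) : ℕ → Bool := fun n =>
  match n with
  | 0 => b
  | Nat.succ m => y m

lemma measurable_consB : Measurable (fun q : Bool × (ℕ → Bool) => consB q.1 q.2) := by
  rw [measurable_pi_iff]
  intro n
  match n with
  | 0 => exact measurable_fst
  | Nat.succ m => exact (measurable_pi_apply m).comp measurable_snd

lemma binExpand_term_nonneg (x : ℕ → Bool) (n : ℕ) :
    0 ≤ (if x n then ((2 : ℝ) ^ (n + 1))⁻¹ else 0) := by
  split <;> positivity

lemma binExpand_term_le (x : ℕ → Bool) (n : ℕ) :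
    (if x n then ((2 : ℝ) ^ (n + 1))⁻¹ else 0) ≤ (1/2) * (1/2)^n := by
  have : ((2:ℝ)^(n+1))⁻¹ = (1/2) * (1/2)^n := by
    rw [pow_succ']; rw [mul_inv]; rw [one_div, inv_pow]
  split
  · rw [this]
  · positivity

lemma binExpand_summable (x : ℕ → Bool) :
    Summable (fun n => if x n then ((2 : ℝ) ^ (n + 1))⁻¹ else 0) := by
  refine Summable.of_nonneg_of_le (binExpand_term_nonneg x) (binExpand_term_le x) ?_
  exact (summable_geometric_of_lt_one (by norm_num) (by norm_num)).mul_left _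

lemma binExpand_nonneg (x : ℕ → Bool) : 0 ≤ binExpand x :=
  tsum_nonneg (binExpand_term_nonneg x)

lemma binExpand_le_one (x : ℕ → Bool) : binExpand x ≤ 1 := by
  have h := Summable.tsum_le_tsum (binExpand_term_le x) (binExpand_summable x)
    ((summable_geometric_of_lt_one (by norm_num) (by norm_num)).mul_left (1/2:ℝ))
  refine h.trans ?_
  rw [tsum_mul_left, tsum_geometric_of_lt_one (by norm_num) (by norm_num)]
  norm_num

lemma binExpand_mem (x : ℕ → Bool) : binExpand x ∈ Set.Icc (0:ℝ) 1 :=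
  ⟨binExpand_nonneg x, binExpand_le_one x⟩

lemma measurable_binExpand : Measurable binExpand := by
  have h : ∀ n : ℕ, Measurable (fun x : ℕ → Bool => if x n then ((2 : ℝ) ^ (n + 1))⁻¹ else 0) := by
    intro n
    have hs : MeasurableSet {x : ℕ → Bool | x n = true} :=
      (measurable_pi_apply (X := fun _ : ℕ => Bool) n) (measurableSet_singleton true)
    exact Measurable.ite hs measurable_const measurable_const
  refine measurable_of_tendsto_metrizable (fun N => ?_) (f := fun N x => ∑ n ∈ Finset.range N, if x n then ((2 : ℝ) ^ (n + 1))⁻¹ else 0) ?_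
  · exact Finset.measurable_sum _ (fun n _ => h n)
  · exact tendsto_pi_nhds.2 fun x => (binExpand_summable x).hasSum.tendsto_sum_nat

lemma binExpand_consB (b : Bool) (y : ℕ → Bool) :
    binExpand (consB b y) = ((if b then 1 else 0) + binExpand y) / 2 := by
  unfold binExpand
  rw [Summable.tsum_eq_zero_add (binExpand_summable (consB b y))]
  have h1 : (if consB b y 0 then ((2:ℝ)^(0+1))⁻¹ else 0) = (if b then (1:ℝ) else 0) / 2 := by
    simp [consB]; split <;> norm_num
  rw [h1]
  have h2 : ∀ n : ℕ, (if consB b y (n+1) then ((2:ℝ)^(n+1+1))⁻¹ else 0)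
      = (if y n then ((2:ℝ)^(n+1))⁻¹ else 0) / 2 := by
    intro n
    simp only [consB]
    by_cases h : y n <;> simp [h, pow_succ] <;> ring
  simp_rw [h2]
  rw [tsum_div_const]
  ring

lemma bern_prob (p : ℝ) (hp : p ∈ Set.Ioo (0:ℝ) 1) : IsProbabilityMeasure (bernoulliBool p) := by
  constructor
  simp only [bernoulliBool, Measure.add_apply, Measure.smul_apply, Measure.dirac_apply,
    smul_eq_mul]
  rw [Set.indicator_of_mem (Set.mem_univ _), Set.indicator_of_mem (Set.mem_univ _)]
  simp only [Pi.one_apply, mul_one]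
  rw [← ENNReal.ofReal_add hp.1.le (by linarith [hp.2])]
  norm_num

lemma map_consB (p : ℝ) (hp : p ∈ Set.Ioo (0:ℝ) 1) {ν : Measure (ℕ → Bool)}
    (hν : IsBernoulliProduct p ν) :
    ((bernoulliBool p).prod ν).map (fun q => consB q.1 q.2) = ν := by
  classical
  haveI := bern_prob p hp
  haveI : ∀ J : Finset ℕ, IsProbabilityMeasure (Measure.pi fun _ : J => bernoulliBool p) :=
    fun J => inferInstance
  haveI : IsProbabilityMeasure ν := hν.isProbabilityMeasure
  refine IsProjectiveLimit.unique ?_ hν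
  intro J
  rw [Measure.map_map (J.measurable_restrict) measurable_consB]
  refine Measure.ext_of_singleton fun f => ?_
  -- the shifted finset
  set J' : Finset ℕ := J.preimage Nat.succ (Function.Injective.injOn Nat.succ_injective)
    with hJ'
  have hmemJ' : ∀ m : ℕ, m ∈ J' ↔ m + 1 ∈ J := by
    intro m; rw [hJ', Finset.mem_preimage]
  set g : ∀ m : J', Bool := fun m => f ⟨(m : ℕ) + 1, (hmemJ' m).1 m.2⟩ with hg
  set A : Set Bool := if h : 0 ∈ J then {f ⟨0, h⟩} else Set.univ with hA
  set B : Set (ℕ → Bool) := J'.restrict ⁻¹' {g} with hB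
  have hpre : (J.restrict ∘ fun q : Bool × (ℕ → Bool) => consB q.1 q.2) ⁻¹' {f} = A ×ˢ B := by
    ext ⟨b, y⟩
    simp only [Set.mem_preimage, Function.comp_apply, Set.mem_singleton_iff, Set.mem_prod,
      hB, hA, funext_iff]
    constructor
    · intro h
      constructor
      · split
        · rename_i h0
          exact Set.mem_singleton_iff.2 ((h ⟨0, h0⟩).symm ▸ rfl)
        · trivial
      · intro m
        exact h ⟨(m : ℕ) + 1, (hmemJ' m).1 m.2⟩
    · rintro ⟨hbA, hyB⟩ ⟨j, hj⟩
      match j with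
      | 0 =>
        simp only [hA, dif_pos hj] at hbA
        exact hbA
      | Nat.succ m =>
        have hm : m ∈ J' := (hmemJ' m).2 hj
        exact hyB ⟨m, hm⟩
  have hAm : MeasurableSet A := trivial
  have hBm : MeasurableSet B := J'.measurable_restrict (measurableSet_singleton g)
  rw [Measure.map_apply ((J.measurable_restrict).comp measurable_consB)
    (measurableSet_singleton f), hpre, Measure.prod_prod]
  have hνB : ν B = ∏ m : J', bernoulliBool p {g m} := by
    rw [hB, ← Measure.map_apply (J'.measurable_restrict) (measurableSet_singleton g), hν J']
    have : ({g} : Set (∀ m : J', Bool)) = Set.univ.pi fun m => {g m} := by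
      ext h; simp [funext_iff, Set.mem_pi]
    rw [this, Measure.pi_pi]
  have hRHS : (Measure.pi fun _ : J => bernoulliBool p) {f} = ∏ j : J, bernoulliBool p {f j} := by
    have : ({f} : Set (∀ j : J, Bool)) = Set.univ.pi fun j => {f j} := by
      ext h; simp [funext_iff, Set.mem_pi]
    rw [this, Measure.pi_pi]
  rw [hνB, hRHS]
  -- now pure finite products
  set F : ℕ → ENNReal := fun n => if h : n ∈ J then bernoulliBool p {f ⟨n, h⟩} else 1 with hF
  have h1 : ∏ j : J, bernoulliBool p {f j} = ∏ n ∈ J, F n := by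
    rw [← Finset.prod_attach J F]
    refine Finset.prod_congr rfl fun j _ => ?_
    rw [hF]; simp only [j.2, dif_pos]
  have h2 : ∏ m : J', bernoulliBool p {g m} = ∏ m ∈ J', F (m + 1) := by
    rw [← Finset.prod_attach J' (fun m => F (m + 1))]
    refine Finset.prod_congr rfl fun m _ => ?_
    rw [hF, hg]; simp only [(hmemJ' m).1 m.2, dif_pos]
  have himg : J'.image (· + 1) = J.erase 0 := by
    ext n
    simp only [Finset.mem_image, Finset.mem_erase, hmemJ']
    constructor
    · rintro ⟨m, hm, rfl⟩; exact ⟨Nat.succ_ne_zero m, hm⟩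
    · rintro ⟨hn0, hn⟩
      have he : n - 1 + 1 = n := by omega
      exact ⟨n - 1, by rw [he]; exact hn, he⟩
  have h3 : ∏ m ∈ J', F (m + 1) = ∏ n ∈ J.erase 0, F n := by
    rw [← himg, Finset.prod_image (fun a _ b _ h => by omega)]
  have h4 : bernoulliBool p A = if h : 0 ∈ J then F 0 else 1 := by
    rw [hA, hF]
    split
    · rename_i h; simp only [h, dif_pos]
    · exact measure_univ
  rw [hνB] at *
  rw [h1, h2, h3, h4]
  split
  · rename_i h0
    rw [hF]; simp only [h0, dif_pos]
    rw [← Finset.mul_prod_erase J F h0, hF]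
    simp only [h0, dif_pos]
  · rw [Finset.erase_eq_of_notMem (by assumption), one_mul]

lemma finite_smul_dirac (c : ℝ) (x : Bool) :
    IsFiniteMeasure (ENNReal.ofReal c • Measure.dirac x) := by
  constructor
  rw [Measure.smul_apply, smul_eq_mul, Measure.dirac_apply_of_mem (Set.mem_univ x), mul_one]
  exact ENNReal.ofReal_lt_top

lemma integral_bern (p : ℝ) (hp : p ∈ Set.Ioo (0:ℝ) 1) (g : Bool → ℂ) :
    ∫ b, g b ∂(bernoulliBool p) = p • g false + (1 - p) • g true := by
  have h0 : (0:ℝ) ≤ p := hp.1.le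
  have h1 : (0:ℝ) ≤ 1 - p := by linarith [hp.2]
  rw [bernoulliBool, integral_add_measure ?_ ?_]
  · rw [integral_smul_measure, integral_smul_measure, integral_dirac, integral_dirac,
      ENNReal.toReal_ofReal h0, ENNReal.toReal_ofReal h1]
  · haveI := finite_smul_dirac p false
    exact Integrable.of_finite
  · haveI := finite_smul_dirac (1 - p) true
    exact Integrable.of_finite

noncomputable def mom (ν : Measure (ℕ → Bool)) (n : ℕ) : ℂ :=
  ∫ x, ((binExpand x : ℝ) : ℂ) ^ n ∂ν

lemma meas_pow (n : ℕ) : Measurable fun x : ℕ → Bool => ((binExpand x : ℝ) : ℂ) ^ n :=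
  (Complex.measurable_ofReal.comp measurable_binExpand).pow_const n

lemma norm_binExpand_pow_le (x : ℕ → Bool) (n : ℕ) : ‖((binExpand x : ℝ) : ℂ) ^ n‖ ≤ 1 := by
  rw [norm_pow, Complex.norm_real, Real.norm_eq_abs, abs_of_nonneg (binExpand_nonneg x)]
  exact pow_le_one₀ (binExpand_nonneg x) (binExpand_le_one x)

lemma integrable_bounded {α : Type*} [MeasurableSpace α] (m : Measure α) [IsFiniteMeasure m]
    {f : α → ℂ} (hf : AEStronglyMeasurable f m) {C : ℝ} (h : ∀ x, ‖f x‖ ≤ C) :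
    Integrable f m :=
  (integrable_const C).mono' hf (ae_of_all _ h)

lemma mom_zero (ν : Measure (ℕ → Bool)) [IsProbabilityMeasure ν] : mom ν 0 = 1 := by
  simp [mom]

lemma mom_norm_le (ν : Measure (ℕ → Bool)) [IsProbabilityMeasure ν] (n : ℕ) :
    ‖mom ν n‖ ≤ 1 := by
  have := norm_integral_le_of_norm_le_const (μ := ν)
    (f := fun x => ((binExpand x : ℝ) : ℂ) ^ n) (C := 1)
    (ae_of_all _ fun x => norm_binExpand_pow_le x n)
  simpa [mom] using this

lemma mom_rec (p : ℝ) (hp : p ∈ Set.Ioo (0:ℝ) 1) {ν : Measure (ℕ → Bool)}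
    (hν : IsBernoulliProduct p ν) (n : ℕ) :
    ((2:ℂ)^n - 1) * mom ν n
      = (1 - (p:ℂ)) * ∑ k ∈ Finset.range n, (n.choose k : ℂ) * mom ν k := by
  haveI := bern_prob p hp
  haveI : IsProbabilityMeasure ν := hν.isProbabilityMeasure
  have hint : ∀ m : ℕ, Integrable (fun x => ((binExpand x:ℝ):ℂ)^m) ν :=
    fun m => integrable_bounded ν (meas_pow m).aestronglyMeasurable (norm_binExpand_pow_le · m)
  have e1 : mom ν n = ∫ q : Bool × (ℕ → Bool),
      ((binExpand (consB q.1 q.2) : ℝ):ℂ)^n ∂((bernoulliBool p).prod ν) := by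
    conv_lhs => rw [mom, ← map_consB p hp hν]
    exact integral_map measurable_consB.aemeasurable (meas_pow n).aestronglyMeasurable
  have e2 : mom ν n = ∫ b, ∫ y, ((binExpand (consB b y):ℝ):ℂ)^n ∂ν ∂(bernoulliBool p) := by
    rw [e1]
    exact integral_prod _ (integrable_bounded _
      (((meas_pow n).comp measurable_consB).aestronglyMeasurable)
      (fun q => norm_binExpand_pow_le _ n))
  rw [integral_bern p hp] at e2
  have hf : (∫ y, ((binExpand (consB false y):ℝ):ℂ)^n ∂ν) = mom ν n / 2^n := by
    have h : ∀ y, ((binExpand (consB false y):ℝ):ℂ)^n = ((binExpand y:ℝ):ℂ)^n / 2^n := by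
      intro y
      rw [binExpand_consB]
      push_cast
      rw [div_pow]
      norm_num
    simp_rw [h]
    rw [integral_div]
    rfl
  have ht : (∫ y, ((binExpand (consB true y):ℝ):ℂ)^n ∂ν)
      = (∑ k ∈ Finset.range (n+1), (n.choose k : ℂ) * mom ν k) / 2^n := by
    have h : ∀ y, ((binExpand (consB true y):ℝ):ℂ)^n
        = (∑ k ∈ Finset.range (n+1), (n.choose k : ℂ) * ((binExpand y:ℝ):ℂ)^k) / 2^n := by
      intro y
      rw [binExpand_consB]
      simp only [if_true]
      push_cast
      rw [div_pow, add_comm (1:ℂ), add_pow]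
      congr 1
      exact Finset.sum_congr rfl fun k _ => by ring
    simp_rw [h]
    rw [integral_div, integral_finset_sum _ (fun k _ => (hint k).const_mul _)]
    congr 1
    refine Finset.sum_congr rfl fun k _ => ?_
    rw [integral_const_mul]
    rfl
  rw [hf, ht, Complex.real_smul, Complex.real_smul] at e2
  push_cast at e2
  have hS : (∑ k ∈ Finset.range (n+1), (n.choose k : ℂ) * mom ν k)
      = (∑ k ∈ Finset.range n, (n.choose k : ℂ) * mom ν k) + mom ν n := by
    rw [Finset.sum_range_succ, Nat.choose_self]
    push_cast
    ring
  have h2 : ((2:ℂ)^n) ≠ 0 := pow_ne_zero _ two_ne_zero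
  rw [hS] at e2
  field_simp at e2
  linear_combination e2

def e0 (N : ℕ) : Fin (N + 1) → ℂ := fun j => if (j : ℕ) = 0 then 1 else 0

section DetPart

variable {p : ℝ} {M : ℕ → ℂ}

lemma Bmat_eq_updateRow (N : ℕ) (p : ℝ) (c d : Fin (N + 1) → ℂ) :
    Bmat N p c = (Bmat N p d).updateRow (Fin.last N) c := by
  ext i j
  rcases eq_or_ne i (Fin.last N) with rfl | h
  · rw [Matrix.updateRow_self]
    simp [Bmat]
  · rw [Matrix.updateRow_ne h]
    have hi : (i : ℕ) < N := Fin.val_lt_last h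
    simp only [Bmat, if_pos hi]

lemma Bmat_last_row (N : ℕ) (p : ℝ) (c : Fin (N + 1) → ℂ) :
    Bmat N p c (Fin.last N) = c := by
  funext j
  simp [Bmat]

lemma Bmat_mulVec_lt (N : ℕ) (hp1 : (1 : ℂ) - p ≠ 0) (c : Fin (N + 1) → ℂ)
    (hrec : ∀ n : ℕ, ((2:ℂ)^(n+1) - 1) * M (n+1)
      = (1 - (p:ℂ)) * ∑ k ∈ Finset.range (n+1), ((n+1).choose k : ℂ) * M k)
    (i : Fin (N + 1)) (hi : (i : ℕ) < N) :
    (Bmat N p c).mulVec (fun j => M (j : ℕ)) i = 0 := by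
  rw [Matrix.mulVec, dotProduct]
  set F : ℕ → ℂ := fun k =>
    (if k ≤ (i:ℕ) then ((((i:ℕ)+1).choose k : ℕ) : ℂ)
      else if k = (i:ℕ)+1 then (1-2^((i:ℕ)+1))/(1-(p:ℂ)) else 0) * M k with hF
  have hsummand : ∀ j : Fin (N+1), Bmat N p c i j * M (j:ℕ) = F (j:ℕ) := by
    intro j
    simp only [Bmat, if_pos hi, hF]
  simp_rw [hsummand]
  rw [Fin.sum_univ_eq_sum_range F (N+1)]
  have hsub : Finset.range ((i:ℕ)+2) ⊆ Finset.range (N+1) := by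
    apply Finset.range_subset_range.2; omega
  rw [← Finset.sum_subset hsub (fun k hk hk2 => ?_)]
  · rw [Finset.sum_range_succ]
    have h1 : ∀ k ∈ Finset.range ((i:ℕ)+1), F k = (((i:ℕ)+1).choose k : ℂ) * M k := by
      intro k hk
      rw [Finset.mem_range] at hk
      rw [hF]
      simp only [if_pos (by omega : k ≤ (i:ℕ))]
    rw [Finset.sum_congr rfl h1]
    have h2 : F ((i:ℕ)+1) = (1-2^((i:ℕ)+1))/(1-(p:ℂ)) * M ((i:ℕ)+1) := by
      rw [hF]
      simp only [if_neg (by omega : ¬ (i:ℕ)+1 ≤ (i:ℕ)), if_pos rfl, if_true]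
    rw [h2]
    have h := hrec (i:ℕ)
    field_simp
    linear_combination -h
  · rw [Finset.mem_range] at hk
    rw [Finset.mem_range] at hk2
    rw [hF]
    simp only [if_neg (by omega : ¬ k ≤ (i:ℕ)), if_neg (by omega : ¬ k = (i:ℕ)+1), zero_mul]

lemma det_Bmat_e0 (N : ℕ) (hp1 : (1 : ℂ) - p ≠ 0) :
    (Bmat N p (e0 N)).det
      = (∏ n ∈ Finset.range N, ((2:ℂ)^(n+1) - 1)) / (1 - (p:ℂ))^N := by
  have hσ : ∀ a : Fin (N+1), (finRotate (N+1))⁻¹ a = a - 1 := by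
    intro a
    rw [Equiv.Perm.inv_eq_iff_eq, finRotate_succ_apply, sub_add_cancel]
  have h0 : (0 : Fin (N+1)) - 1 = Fin.last N := by
    rw [sub_eq_iff_eq_add]
    exact (Fin.last_add_one N).symm
  have hperm := Matrix.det_permute ((finRotate (N+1))⁻¹) (Bmat N p (e0 N))
  rw [Equiv.Perm.sign_inv, sign_finRotate] at hperm
  simp only [Units.val_pow_eq_pow_val, Units.val_neg, Units.val_one, Int.cast_pow,
    Int.cast_neg, Int.cast_one] at hperm
  have htri : ((Bmat N p (e0 N)).submatrix (⇑(finRotate (N+1))⁻¹) id).BlockTriangular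
      OrderDual.toDual := by
    intro a b hab
    simp only [OrderDual.toDual_lt_toDual] at hab
    simp only [Matrix.submatrix_apply, id_eq, hσ]
    rcases eq_or_ne a 0 with rfl | ha
    · rw [h0, Bmat_last_row]
      have hb : (b:ℕ) ≠ 0 := by
        intro hb0
        exact (Fin.pos_iff_ne_zero.1 hab) (Fin.ext hb0)
      simp [e0, hb]
    · have ha' : ((a - 1 : Fin (N+1)) : ℕ) = (a:ℕ) - 1 := by
        rw [Fin.coe_sub_one, if_neg ha]
      have h1 : 1 ≤ (a:ℕ) := by
        rcases Nat.eq_zero_or_pos (a:ℕ) with h | h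
        · exact absurd (Fin.ext h) ha
        · exact h
      have hb : (a:ℕ) < (b:ℕ) := hab
      have hbN : (b:ℕ) ≤ N := Nat.lt_succ_iff.1 b.isLt
      simp only [Bmat, ha']
      rw [if_pos (by omega : (a:ℕ) - 1 < N), if_neg (by omega : ¬ (b:ℕ) ≤ (a:ℕ) - 1),
        if_neg (by omega : ¬ (b:ℕ) = (a:ℕ) - 1 + 1)]
  have hdet := Matrix.det_of_lowerTriangular _ htri
  rw [hperm] at hdet
  have hdiag : (∏ i : Fin (N+1),
      ((Bmat N p (e0 N)).submatrix (⇑(finRotate (N+1))⁻¹) id) i i)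
      = ∏ n ∈ Finset.range N, ((1:ℂ) - 2^(n+1)) / (1 - (p:ℂ)) := by
    rw [Fin.prod_univ_succ]
    have hz : ((Bmat N p (e0 N)).submatrix (⇑(finRotate (N+1))⁻¹) id) 0 0 = 1 := by
      simp only [Matrix.submatrix_apply, id_eq, hσ]
      rw [h0, Bmat_last_row]
      simp [e0]
    rw [hz, one_mul]
    have hterm : ∀ i : Fin N,
        ((Bmat N p (e0 N)).submatrix (⇑(finRotate (N+1))⁻¹) id) i.succ i.succ
          = ((1:ℂ) - 2^((i:ℕ)+1)) / (1 - (p:ℂ)) := by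
      intro i
      simp only [Matrix.submatrix_apply, id_eq, hσ]
      have hne : (i.succ : Fin (N+1)) ≠ 0 := Fin.succ_ne_zero i
      have hval : ((i.succ - 1 : Fin (N+1)) : ℕ) = (i:ℕ) := by
        rw [Fin.coe_sub_one, if_neg hne, Fin.val_succ]
        omega
      simp only [Bmat, hval, Fin.val_succ]
      rw [if_pos i.isLt, if_neg (by omega : ¬ (i:ℕ) + 1 ≤ (i:ℕ))]
      norm_num
    rw [Finset.prod_congr rfl (fun i _ => hterm i)]
    exact Fin.prod_univ_eq_prod_range (fun n => ((1:ℂ) - 2^(n+1)) / (1 - (p:ℂ))) N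
  rw [hdiag] at hdet
  have hsplit : (∏ n ∈ Finset.range N, ((1:ℂ) - 2^(n+1)) / (1 - (p:ℂ)))
      = (-1:ℂ)^N * ((∏ n ∈ Finset.range N, ((2:ℂ)^(n+1) - 1)) / (1 - (p:ℂ))^N) := by
    rw [Finset.prod_div_distrib, Finset.prod_const, Finset.card_range]
    have : ∀ n ∈ Finset.range N, ((1:ℂ) - 2^(n+1)) = (-1) * ((2:ℂ)^(n+1) - 1) :=
      fun n _ => by ring
    rw [Finset.prod_congr rfl this, Finset.prod_mul_distrib, Finset.prod_const,
      Finset.card_range]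
    ring
  rw [hsplit] at hdet
  have hsq : ((-1:ℂ)^N) * ((-1:ℂ)^N) = 1 := by
    rw [← pow_add, ← two_mul, pow_mul]
    norm_num
  calc (Bmat N p (e0 N)).det
      = ((-1:ℂ)^N) * (((-1:ℂ)^N) * (Bmat N p (e0 N)).det) := by rw [← mul_assoc, hsq, one_mul]
    _ = ((-1:ℂ)^N) * ((-1:ℂ)^N * ((∏ n ∈ Finset.range N, ((2:ℂ)^(n+1) - 1)) / (1 - (p:ℂ))^N)) := by
        rw [Nat.add_sub_cancel] at hdet; rw [hdet]
    _ = (∏ n ∈ Finset.range N, ((2:ℂ)^(n+1) - 1)) / (1 - (p:ℂ))^N := by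
        rw [← mul_assoc, hsq, one_mul]

lemma sum_e0_mul (N : ℕ) (M : ℕ → ℂ) :
    (∑ j : Fin (N+1), e0 N j * M (j:ℕ)) = M 0 := by
  rw [Finset.sum_eq_single (0 : Fin (N+1))]
  · simp [e0]
  · intro j _ hj
    have : (j:ℕ) ≠ 0 := fun h => hj (Fin.ext h)
    simp [e0, this]
  · intro h
    exact absurd (Finset.mem_univ _) h

lemma det_Bmat (N : ℕ) (hp1 : (1 : ℂ) - p ≠ 0) (c : Fin (N + 1) → ℂ)
    (hM0 : M 0 = 1)
    (hrec : ∀ n : ℕ, ((2:ℂ)^(n+1) - 1) * M (n+1)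
      = (1 - (p:ℂ)) * ∑ k ∈ Finset.range (n+1), ((n+1).choose k : ℂ) * M k) :
    (Bmat N p c).det = (∑ j : Fin (N+1), c j * M (j:ℕ))
      * ((∏ n ∈ Finset.range N, ((2:ℂ)^(n+1) - 1)) / (1 - (p:ℂ))^N) := by
  classical
  set s : ℂ := ∑ j : Fin (N+1), c j * M (j:ℕ) with hs
  have hsing : (Bmat N p (fun j => c j - s * e0 N j)).det = 0 := by
    rw [← Matrix.exists_mulVec_eq_zero_iff]
    refine ⟨fun j => M (j:ℕ), ?_, ?_⟩
    · intro h
      have := congrFun h 0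
      simp only [Pi.zero_apply] at this
      rw [Fin.val_zero, hM0] at this
      exact one_ne_zero this
    · funext i
      rcases lt_or_ge (i:ℕ) N with hi | hi
      · exact Bmat_mulVec_lt N hp1 _ hrec i hi
      · have hil : i = Fin.last N := Fin.ext (by
          have := Nat.lt_succ_iff.1 i.isLt
          simp only [Fin.val_last]
          omega)
        subst hil
        rw [Matrix.mulVec, dotProduct]
        have hrow : ∀ j : Fin (N+1),
            Bmat N p (fun j => c j - s * e0 N j) (Fin.last N) j = c j - s * e0 N j := by
          intro j
          rw [Bmat_last_row]
        simp_rw [hrow, sub_mul, Finset.sum_sub_distrib]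
        simp_rw [mul_assoc]
        rw [← Finset.mul_sum, sum_e0_mul N M, hM0, mul_one, ← hs, sub_self]
        rfl
  have hdecomp : c = (fun j => c j - s * e0 N j) + s • (e0 N) := by
    funext j
    simp only [Pi.add_apply, Pi.smul_apply, smul_eq_mul]
    ring
  have h1 : (Bmat N p c).det
      = ((Bmat N p (e0 N)).updateRow (Fin.last N) c).det := by
    rw [← Bmat_eq_updateRow]
  rw [h1, hdecomp, Matrix.det_updateRow_add, Matrix.det_updateRow_smul]
  rw [← Bmat_eq_updateRow N p _ (e0 N)]
  rw [hsing, zero_add]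
  have : (Bmat N p (e0 N)).updateRow (Fin.last N) (e0 N) = Bmat N p (e0 N) := by
    exact (Bmat_eq_updateRow N p (e0 N) (e0 N)).symm
  rw [this, det_Bmat_e0 N hp1]

lemma scaled_det_Bmat (N : ℕ) (hp1 : (1 : ℂ) - p ≠ 0) (c : Fin (N + 1) → ℂ)
    (hM0 : M 0 = 1)
    (hrec : ∀ n : ℕ, ((2:ℂ)^(n+1) - 1) * M (n+1)
      = (1 - (p:ℂ)) * ∑ k ∈ Finset.range (n+1), ((n+1).choose k : ℂ) * M k) :
    (1 - (p:ℂ)) ^ N / (∏ n ∈ Finset.range N, ((2 : ℂ) ^ (n + 1) - 1)) * (Bmat N p c).det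
      = ∑ j : Fin (N+1), c j * M (j:ℕ) := by
  have hprod : (∏ n ∈ Finset.range N, ((2:ℂ)^(n+1) - 1)) ≠ 0 := by
    apply Finset.prod_ne_zero_iff.2
    intro n _
    intro h
    have h2 : (2:ℂ)^(n+1) = 1 := by linear_combination h
    have := congrArg (norm : ℂ → ℝ) h2
    rw [norm_pow, Complex.norm_two, norm_one] at this
    have h3 : (2:ℝ)^(n+1) ≥ 2^1 := pow_le_pow_right₀ (by norm_num) (by omega)
    rw [this] at h3
    norm_num at h3
  rw [det_Bmat N hp1 c hM0 hrec]
  have hp1N : (1 - (p:ℂ))^N ≠ 0 := pow_ne_zero _ hp1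
  field_simp

end DetPart

section Analysis

variable {ν : Measure (ℕ → Bool)} [IsProbabilityMeasure ν] {ω : ℂ}

lemma norm_omega_mul_le (x : ℕ → Bool) : ‖ω * (binExpand x : ℝ)‖ ≤ ‖ω‖ := by
  rw [norm_mul, Complex.norm_real, Real.norm_eq_abs, abs_of_nonneg (binExpand_nonneg x)]
  calc ‖ω‖ * binExpand x ≤ ‖ω‖ * 1 :=
        mul_le_mul_of_nonneg_left (binExpand_le_one x) (norm_nonneg ω)
    _ = ‖ω‖ := mul_one _

lemma meas_term (k : ℕ) :
    Measurable (fun x : ℕ → Bool => (ω * (binExpand x : ℝ)) ^ k / (k : ℂ)) :=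
  (((Complex.measurable_ofReal.comp measurable_binExpand).const_mul ω).pow_const k).div_const _

lemma norm_term_le (hω : ‖ω‖ < 1) (x : ℕ → Bool) (k : ℕ) :
    ‖(ω * (binExpand x : ℝ)) ^ k / (k : ℂ)‖ ≤ ‖ω‖ ^ k := by
  match k with
  | 0 => simp
  | Nat.succ m =>
    rw [norm_div, norm_pow]
    have h1 : ‖((m+1 : ℕ) : ℂ)‖ ≥ 1 := by
      rw [Complex.norm_natCast]
      exact_mod_cast Nat.one_le_iff_ne_zero.2 (Nat.succ_ne_zero m)
    calc ‖ω * (binExpand x : ℝ)‖ ^ (m+1) / ‖((m+1 : ℕ) : ℂ)‖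
        ≤ ‖ω * (binExpand x : ℝ)‖ ^ (m+1) / 1 := by
          exact div_le_div_of_nonneg_left (by positivity) one_pos h1
      _ = ‖ω * (binExpand x : ℝ)‖ ^ (m+1) := div_one _
      _ ≤ ‖ω‖ ^ (m+1) := pow_le_pow_left₀ (norm_nonneg _) (norm_omega_mul_le x) _

lemma hasSum_moments (hω : ‖ω‖ < 1) :
    HasSum (fun k : ℕ => ∫ x, (ω * (binExpand x : ℝ)) ^ k / (k : ℂ) ∂ν)
      (-∫ x, Complex.log (1 - ω * (binExpand x : ℝ)) ∂ν) := by
  have hlt : ∀ x, ‖ω * (binExpand x : ℝ)‖ < 1 := fun x =>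
    lt_of_le_of_lt (norm_omega_mul_le x) hω
  have hpt : ∀ x : ℕ → Bool, HasSum (fun k : ℕ => (ω * (binExpand x : ℝ)) ^ k / (k : ℂ))
      (-Complex.log (1 - ω * (binExpand x : ℝ))) := fun x =>
    Complex.hasSum_taylorSeries_neg_log (hlt x)
  have hsummable : Summable (fun k : ℕ => ∫ x, (ω * (binExpand x : ℝ)) ^ k / (k : ℂ) ∂ν) := by
    refine Summable.of_norm_bounded (g := fun k => ‖ω‖ ^ k)
      (summable_geometric_of_lt_one (norm_nonneg ω) hω) (fun k => ?_)
    have := norm_integral_le_of_norm_le_const (μ := ν)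
      (f := fun x => (ω * (binExpand x : ℝ)) ^ k / (k : ℂ)) (C := ‖ω‖ ^ k)
      (ae_of_all _ fun x => norm_term_le hω x k)
    simpa using this
  have hlint : (∑' k : ℕ, ∫⁻ x, ‖(ω * (binExpand x : ℝ)) ^ k / (k : ℂ)‖₊ ∂ν) ≠ ⊤ := by
    have hle : ∀ k : ℕ, (∫⁻ x, ‖(ω * (binExpand x : ℝ)) ^ k / (k : ℂ)‖₊ ∂ν)
        ≤ ENNReal.ofReal (‖ω‖ ^ k) := by
      intro k
      have : ∀ x : ℕ → Bool, (‖(ω * (binExpand x : ℝ)) ^ k / (k : ℂ)‖₊ : ENNReal)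
          ≤ ENNReal.ofReal (‖ω‖ ^ k) := by
        intro x
        rw [← enorm_eq_nnnorm, ← ofReal_norm]
        exact ENNReal.ofReal_le_ofReal (norm_term_le hω x k)
      calc (∫⁻ x, ‖(ω * (binExpand x : ℝ)) ^ k / (k : ℂ)‖₊ ∂ν)
          ≤ ∫⁻ _, ENNReal.ofReal (‖ω‖ ^ k) ∂ν := lintegral_mono this
        _ = ENNReal.ofReal (‖ω‖ ^ k) := by rw [lintegral_const, measure_univ, mul_one]
    refine ne_top_of_le_ne_top ?_ (ENNReal.tsum_le_tsum hle)
    rw [← ENNReal.ofReal_tsum_of_nonneg (fun k => by positivity)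
      (summable_geometric_of_lt_one (norm_nonneg ω) hω)]
    exact ENNReal.ofReal_ne_top
  have hinterchange := integral_tsum (ι := ℕ) (μ := ν)
    (f := fun k x => (ω * (binExpand x : ℝ)) ^ k / (k : ℂ))
    (fun k => (meas_term k).aestronglyMeasurable) hlint
  have hptint : (∫ x, ∑' k : ℕ, (ω * (binExpand x : ℝ)) ^ k / (k : ℂ) ∂ν)
      = ∫ x, -Complex.log (1 - ω * (binExpand x : ℝ)) ∂ν := by
    refine integral_congr_ae (ae_of_all _ fun x => ?_)
    exact (hpt x).tsum_eq
  have : (∑' k : ℕ, ∫ x, (ω * (binExpand x : ℝ)) ^ k / (k : ℂ) ∂ν)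
      = -∫ x, Complex.log (1 - ω * (binExpand x : ℝ)) ∂ν := by
    rw [← hinterchange, hptint, integral_neg]
  rw [← this]
  exact hsummable.hasSum

end Analysis

section Glue

variable {ν : Measure (ℕ → Bool)} [IsProbabilityMeasure ν] {ω : ℂ}

lemma integral_log_transfer (ν : Measure (ℕ → Bool)) [IsProbabilityMeasure ν] (ω : ℂ) :
    (∫ x in Set.Icc (0:ℝ) 1, Complex.log (1 - ω * x) ∂(ν.map binExpand))
      = ∫ y, Complex.log (1 - ω * (binExpand y : ℝ)) ∂ν := by
  have hmeas : Measurable fun x : ℝ => Complex.log (1 - ω * x) :=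
    Complex.measurable_log.comp (measurable_const.sub (Complex.measurable_ofReal.const_mul ω))
  have hae : ∀ᵐ x ∂(ν.map binExpand), x ∈ Set.Icc (0:ℝ) 1 := by
    rw [ae_iff, Measure.map_apply measurable_binExpand]
    · have hempty : binExpand ⁻¹' {x : ℝ | ¬ x ∈ Set.Icc (0:ℝ) 1} = ∅ := by
        ext y
        simp [binExpand_nonneg y, binExpand_le_one y]
      rw [hempty]
      exact measure_empty
    · exact measurableSet_Icc.compl
  rw [Measure.restrict_eq_self_of_ae_mem hae]
  exact integral_map measurable_binExpand.aemeasurable hmeas.aestronglyMeasurable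

lemma term_eq (ν : Measure (ℕ → Bool)) [IsProbabilityMeasure ν] (ω : ℂ) (k : ℕ) :
    (∫ x, (ω * (binExpand x : ℝ)) ^ k / (k : ℂ) ∂ν)
      = (if k = 0 then 0 else ω ^ k / (k : ℂ)) * mom ν k := by
  match k with
  | 0 => simp
  | Nat.succ m =>
    have h : ∀ x : ℕ → Bool, (ω * (binExpand x : ℝ)) ^ (m+1) / ((m+1 : ℕ) : ℂ)
        = (ω ^ (m+1) / ((m+1 : ℕ) : ℂ)) * ((binExpand x : ℝ) : ℂ) ^ (m+1) := by
      intro x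
      rw [mul_pow]
      ring
    simp_rw [h]
    rw [integral_const_mul]
    rw [if_neg (Nat.succ_ne_zero m)]
    rfl

end Glue

open Filter in
/-- For `p ∈ (0,1)` and `ω ∈ ℂ` with `|ω| < 1`,
`((1-p)^N / ∏_{n=1}^N (2^n-1)) · det B_N(p; 0, ω, ω²/2, …, ω^N/N)
  → -∫_0^1 Log(1 - ωx) dμ_p(x)` as `N → ∞`, with `Log` the principal logarithm. -/
theorem stmt16 (p : ℝ) (hp : p ∈ Set.Ioo (0 : ℝ) 1) (μ : Measure ℝ)
    (hμ : IsBernoulliMeasure p μ) (ω : ℂ) (hω : ‖ω‖ < 1) :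
    Tendsto
      (fun N : ℕ =>
        (1 - (p : ℂ)) ^ N / (∏ n ∈ Finset.range N, ((2 : ℂ) ^ (n + 1) - 1)) *
          (Bmat N p fun j =>
            if (j : ℕ) = 0 then 0 else ω ^ (j : ℕ) / ((j : ℕ) : ℂ)).det)
      atTop
      (nhds (-∫ x in Set.Icc (0 : ℝ) 1, Complex.log (1 - ω * x) ∂μ)) := by
  classical
  obtain ⟨ν, hν, hμmap⟩ := hμ
  haveI := bern_prob p hp
  haveI : IsProbabilityMeasure ν := hν.isProbabilityMeasure
  have hp1 : (1:ℂ) - (p:ℝ) ≠ 0 := by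
    intro h
    have h2 : ((1 - p : ℝ) : ℂ) = 0 := by push_cast; linear_combination h
    rw [Complex.ofReal_eq_zero] at h2
    linarith [hp.2]
  have hrec : ∀ n : ℕ, ((2:ℂ)^(n+1) - 1) * mom ν (n+1)
      = (1 - (p:ℂ)) * ∑ k ∈ Finset.range (n+1), ((n+1).choose k : ℂ) * mom ν k :=
    fun n => mom_rec p hp hν (n+1)
  have hM0 : mom ν 0 = 1 := mom_zero ν
  have hL : (∫ x in Set.Icc (0:ℝ) 1, Complex.log (1 - ω * x) ∂μ)
      = ∫ y, Complex.log (1 - ω * (binExpand y : ℝ)) ∂ν := by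
    rw [hμmap]
    exact integral_log_transfer ν ω
  rw [hL]
  have hsum := hasSum_moments (ν := ν) (ω := ω) hω
  have htend := hsum.tendsto_sum_nat.comp (tendsto_add_atTop_nat 1)
  refine htend.congr fun N => ?_
  rw [scaled_det_Bmat (M := mom ν) N hp1 _ hM0 hrec]
  rw [show (∑ j : Fin (N+1), (if ((j : Fin (N+1)) : ℕ) = 0 then (0:ℂ)
        else ω ^ ((j : Fin (N+1)) : ℕ) / (((j : Fin (N+1)) : ℕ) : ℂ)) * mom ν (j : ℕ))
      = ∑ k ∈ Finset.range (N+1), (if k = 0 then (0:ℂ) else ω ^ k / (k : ℂ)) * mom ν k from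
    Fin.sum_univ_eq_sum_range (fun k => (if k = 0 then (0:ℂ) else ω ^ k / (k : ℂ)) * mom ν k)
      (N+1)]
  exact Finset.sum_congr rfl fun k _ => term_eq ν ω k
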